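/- Under the bijection of the previous statement, the exact log-likelihood of the dimension-decreasing flowified linear layer decomposes as log p(x) = log p_inv(y_{m+1:n} | Σ_m y_{1:m}) + ∑_{i=1}^m log σ_i + log p(z), where z = Wx + b, y = Ux, p(z) is any density on ℝ^m and p_inv(·|·) is a conditional density on ℝ^{n−m}. In particular, if p and p_inv(·|c) are probability densities for every c, then p(x) so defined is a probability density on ℝ^n. -/

import Mathlib

open Matrix MeasureTheory

private lemma measurable_mulVec' {k l : ℕ} (M : Matrix (Fin k) (Fin l) ℝ) :
    Measurable (M.mulVec) := by
  apply measurable_pi_iff.2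
  intro i
  simp only [Matrix.mulVec, dotProduct]
  exact Finset.measurable_sum _ fun j _ => (measurable_pi_apply j).const_mul _

private lemma lintegral_mulVec_det_one {k : ℕ} (M : Matrix (Fin k) (Fin k) ℝ)
    (h : M.det = 1) (f : (Fin k → ℝ) → ENNReal) (hf : Measurable f) :
    ∫⁻ x, f (M.mulVec x) = ∫⁻ x, f x := by
  have hmap : Measure.map (Matrix.toLin' M) volume = volume := by
    rw [Real.map_matrix_volume_pi_eq_smul_volume_pi (by rw [h]; norm_num), h]
    norm_num
  have hfun : (fun x => M.mulVec x) = Matrix.toLin' M := by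
    funext x; simp [Matrix.toLin'_apply]
  have hmp : MeasurePreserving (fun x => M.mulVec x) volume volume := by
    refine ⟨measurable_mulVec' M, ?_⟩
    rw [hfun]; exact hmap
  exact hmp.lintegral_comp hf

private lemma lintegral_scale {k : ℕ} (σ : Fin k → ℝ) (hσ : ∀ i, 0 < σ i)
    (f : (Fin k → ℝ) → ENNReal) (hf : Measurable f) :
    ∫⁻ x : Fin k → ℝ, f (fun i => σ i * x i)
      = (ENNReal.ofReal (∏ i, σ i))⁻¹ * ∫⁻ x, f x := by
  have hP : 0 < ∏ i, σ i := Finset.prod_pos fun i _ => hσ i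
  have hdet : (Matrix.diagonal σ).det = ∏ i, σ i := Matrix.det_diagonal
  have hmap : Measure.map (Matrix.toLin' (Matrix.diagonal σ)) volume
      = ENNReal.ofReal ((∏ i, σ i)⁻¹) • volume := by
    rw [Real.map_matrix_volume_pi_eq_smul_volume_pi (by rw [hdet]; exact hP.ne'), hdet,
      abs_of_nonneg (inv_nonneg.2 hP.le)]
  have hfun : (fun x : Fin k → ℝ => (fun i => σ i * x i)) = Matrix.toLin' (Matrix.diagonal σ) := by
    funext x; funext i; simp [Matrix.toLin'_apply, Matrix.mulVec_diagonal]
  calc ∫⁻ x : Fin k → ℝ, f (fun i => σ i * x i)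
      = ∫⁻ x, f (Matrix.toLin' (Matrix.diagonal σ) x) := by rw [← hfun]
    _ = ∫⁻ y, f y ∂(Measure.map (Matrix.toLin' (Matrix.diagonal σ)) volume) := by
        rw [lintegral_map hf]
        · exact (Matrix.toLin' (Matrix.diagonal σ)).continuous_of_finiteDimensional.measurable
    _ = (ENNReal.ofReal (∏ i, σ i))⁻¹ * ∫⁻ x, f x := by
        rw [hmap, lintegral_smul_measure, ENNReal.ofReal_inv_of_pos hP, smul_eq_mul]

private lemma lintegral_ofReal_eq_one {α : Type*} [MeasureSpace α] {g : α → ℝ}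
    (hg : ∀ x, 0 ≤ g x) (hgi : ∫ x, g x = 1) :
    ∫⁻ x, ENNReal.ofReal (g x) = 1 := by
  have hint : Integrable g := by
    by_contra h
    rw [integral_undef h] at hgi; norm_num at hgi
  rw [← ofReal_integral_eq_lintegral_ofReal hint (Filter.Eventually.of_forall hg), hgi,
    ENNReal.ofReal_one]

private lemma integral_eq_one_of_lintegral {α : Type*} [MeasureSpace α] {g : α → ℝ}
    (hg : ∀ x, 0 ≤ g x) (hgm : Measurable g) (hgi : ∫⁻ x, ENNReal.ofReal (g x) = 1) :
    ∫ x, g x = 1 := by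
  have hint : Integrable g := by
    refine ⟨hgm.aestronglyMeasurable, ?_⟩
    rw [hasFiniteIntegral_iff_norm]
    simp_rw [fun x => abs_of_nonneg (hg x) ▸ (Real.norm_eq_abs (g x))]
    rw [hgi]; norm_num
  have := ofReal_integral_eq_lintegral_ofReal hint (Filter.Eventually.of_forall hg)
  rw [hgi] at this
  rwa [ENNReal.ofReal_eq_one] at this

private lemma measurePreserving_split {n m : ℕ} (hmn : m ≤ n) :
    MeasurePreserving (fun y : Fin n → ℝ =>
      ((fun i : Fin m => y ⟨(i:ℕ), lt_of_lt_of_le i.isLt hmn⟩),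
       (fun j : Fin (n-m) => y ⟨m + (j:ℕ), by have := j.isLt; omega⟩)))
      (volume) (volume) := by
  have h : m + (n - m) = n := Nat.add_sub_cancel' hmn
  let ι : Fin m ⊕ Fin (n - m) ≃ Fin n := finSumFinEquiv.trans (finCongr h)
  let e1 := MeasurableEquiv.piCongrLeft (fun _ : Fin n => ℝ) ι
  let e2 := MeasurableEquiv.sumPiEquivProdPi (fun _ : Fin m ⊕ Fin (n-m) => ℝ)
  have h1 : MeasurePreserving e1.symm volume volume :=
    (volume_measurePreserving_piCongrLeft (fun _ => ℝ) ι).symm e1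
  have h2 : MeasurePreserving e2 volume volume :=
    volume_measurePreserving_sumPiEquivProdPi _
  have hcomp := h2.comp h1
  convert hcomp using 1
  funext y
  rfl

/-- Funnel factorization of the dimension-decreasing flowified linear layer: the density
`p(x) = p_inv(y_{m+1:n} | Σ_m y_{1:m}) · (∏ᵢ σᵢ) · p_z(Wx + b)` (equivalently
`log p(x) = log p_inv + ∑ᵢ log σᵢ + log p_z(z)`, with `z = Wx+b`, `y = Ux`),
defined from a base density `p_z` and a conditional density `p_inv`, is a probability
density on `ℝ^n`. -/
theorem funnel_density_is_probability_density
    {m n : ℕ} (hmn : m ≤ n)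
    (U : Matrix (Fin n) (Fin n) ℝ) (V : Matrix (Fin m) (Fin m) ℝ)
    (hU : Uᵀ * U = 1) (hU' : U * Uᵀ = 1) (hUdet : U.det = 1)
    (hV : Vᵀ * V = 1) (hV' : V * Vᵀ = 1) (hVdet : V.det = 1)
    (σ : Fin m → ℝ) (hσ : ∀ i, 0 < σ i)
    (S : Matrix (Fin m) (Fin n) ℝ)
    (hS : ∀ i j, S i j = if (i : ℕ) = (j : ℕ) then σ i else 0)
    (b : Fin m → ℝ)
    (p_z : (Fin m → ℝ) → ℝ)
    (hpz : ∀ z, 0 ≤ p_z z) (hpzmeas : Measurable p_z)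
    (hpzint : ∫ z, p_z z = 1)
    (p_inv : (Fin (n - m) → ℝ) → (Fin m → ℝ) → ℝ)
    (hpinv : ∀ y₂ c, 0 ≤ p_inv y₂ c)
    (hpinvmeas : Measurable (Function.uncurry p_inv))
    (hpinvint : ∀ c, ∫ y₂, p_inv y₂ c = 1) :
    (∀ x : Fin n → ℝ,
      0 ≤ p_inv (fun j => U.mulVec x ⟨m + (j : ℕ), by have := j.isLt; omega⟩)
            (fun i : Fin m => σ i *
              U.mulVec x ⟨(i : ℕ), lt_of_lt_of_le i.isLt hmn⟩) *
          (∏ i, σ i) * p_z ((V * S * U).mulVec x + b)) ∧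
    ∫ x : Fin n → ℝ,
      p_inv (fun j => U.mulVec x ⟨m + (j : ℕ), by have := j.isLt; omega⟩)
          (fun i : Fin m => σ i *
            U.mulVec x ⟨(i : ℕ), lt_of_lt_of_le i.isLt hmn⟩) *
        (∏ i, σ i) * p_z ((V * S * U).mulVec x + b) = 1 := by
  have hP : 0 < ∏ i, σ i := Finset.prod_pos fun i _ => hσ i
  -- the key matrix identity
  have hSmul : ∀ y : Fin n → ℝ,
      S.mulVec y = fun i : Fin m => σ i * y ⟨(i:ℕ), lt_of_lt_of_le i.isLt hmn⟩ := by
    intro y; funext i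
    simp only [Matrix.mulVec, dotProduct]
    rw [Finset.sum_eq_single (⟨(i:ℕ), lt_of_lt_of_le i.isLt hmn⟩ : Fin n)]
    · rw [hS]; simp
    · intro j _ hj
      rw [hS]
      have hne : (i:ℕ) ≠ (j:ℕ) := by
        intro hc; apply hj; exact Fin.ext hc.symm
      simp [hne]
    · intro hmem; exact absurd (Finset.mem_univ _) hmem
  have hkey : ∀ x : Fin n → ℝ, (V * S * U).mulVec x
      = V.mulVec (fun i : Fin m => σ i *
          U.mulVec x ⟨(i:ℕ), lt_of_lt_of_le i.isLt hmn⟩) := by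
    intro x
    rw [← Matrix.mulVec_mulVec, ← Matrix.mulVec_mulVec, hSmul]
  -- the product-space density
  set G : (Fin m → ℝ) × (Fin (n-m) → ℝ) → ENNReal :=
    fun q => ENNReal.ofReal (p_inv q.2 (fun i => σ i * q.1 i)) * ENNReal.ofReal (∏ i, σ i) *
      ENNReal.ofReal (p_z (V.mulVec (fun i => σ i * q.1 i) + b)) with hGdef
  have hscalemeas : Measurable (fun q : (Fin m → ℝ) × (Fin (n-m) → ℝ) =>
      (fun i => σ i * q.1 i : Fin m → ℝ)) := by
    apply measurable_pi_iff.2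
    intro i
    exact ((measurable_pi_apply i).comp measurable_fst).const_mul _
  have hGmeas : Measurable G := by
    rw [hGdef]
    refine Measurable.mul (M := ENNReal) (Measurable.mul (M := ENNReal) ?_ ?_) ?_
    · exact (ENNReal.measurable_ofReal).comp
        (hpinvmeas.comp ((measurable_snd).prodMk hscalemeas))
    · exact measurable_const
    · exact (ENNReal.measurable_ofReal).comp
        (hpzmeas.comp (((measurable_mulVec' V).comp hscalemeas).add_const b))
  -- measurability of the integrand
  have hmvU : Measurable (U.mulVec) := measurable_mulVec' U
  have hA : Measurable (fun x : Fin n → ℝ =>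
      (fun j : Fin (n-m) => U.mulVec x ⟨m + (j:ℕ), by have := j.isLt; omega⟩)) := by
    apply measurable_pi_iff.2
    intro j
    exact (measurable_pi_apply _).comp hmvU
  have hB : Measurable (fun x : Fin n → ℝ =>
      (fun i : Fin m => σ i * U.mulVec x ⟨(i:ℕ), lt_of_lt_of_le i.isLt hmn⟩)) := by
    apply measurable_pi_iff.2
    intro i
    exact ((measurable_pi_apply _).comp hmvU).const_mul _
  have hFmeas : Measurable (fun x : Fin n → ℝ =>
      p_inv (fun j => U.mulVec x ⟨m + (j : ℕ), by have := j.isLt; omega⟩)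
          (fun i : Fin m => σ i * U.mulVec x ⟨(i : ℕ), lt_of_lt_of_le i.isLt hmn⟩) *
        (∏ i, σ i) * p_z ((V * S * U).mulVec x + b)) := by
    refine Measurable.mul (Measurable.mul ?_ measurable_const) ?_
    · exact hpinvmeas.comp (hA.prodMk hB)
    · exact hpzmeas.comp ((measurable_mulVec' (V * S * U)).add_const b)
  refine ⟨fun x => mul_nonneg (mul_nonneg (hpinv _ _) hP.le) (hpz _), ?_⟩
  apply integral_eq_one_of_lintegral
    (fun x => mul_nonneg (mul_nonneg (hpinv _ _) hP.le) (hpz _)) hFmeas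
  -- pointwise identification with G composed with the split map and U
  have hpoint : ∀ x : Fin n → ℝ,
      ENNReal.ofReal (p_inv (fun j => U.mulVec x ⟨m + (j : ℕ), by have := j.isLt; omega⟩)
          (fun i : Fin m => σ i * U.mulVec x ⟨(i : ℕ), lt_of_lt_of_le i.isLt hmn⟩) *
        (∏ i, σ i) * p_z ((V * S * U).mulVec x + b))
      = G ((fun i : Fin m => U.mulVec x ⟨(i:ℕ), lt_of_lt_of_le i.isLt hmn⟩),
           (fun j : Fin (n-m) => U.mulVec x ⟨m + (j:ℕ), by have := j.isLt; omega⟩)) := by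
    intro x
    rw [ENNReal.ofReal_mul (mul_nonneg (hpinv _ _) hP.le),
      ENNReal.ofReal_mul (hpinv _ _), hGdef]
    simp only []
    rw [hkey]
  simp_rw [hpoint]
  -- apply U-invariance and the splitting
  have hsplit := measurePreserving_split (m := m) (n := n) hmn
  have hGsplit : Measurable (fun y : Fin n → ℝ =>
      G ((fun i : Fin m => y ⟨(i:ℕ), lt_of_lt_of_le i.isLt hmn⟩),
         (fun j : Fin (n-m) => y ⟨m + (j:ℕ), by have := j.isLt; omega⟩))) :=
    hGmeas.comp hsplit.measurable
  rw [lintegral_mulVec_det_one U hUdet _ hGsplit, hsplit.lintegral_comp hGmeas]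
  -- Tonelli
  rw [MeasureTheory.Measure.volume_eq_prod _ _, lintegral_prod _ hGmeas.aemeasurable]
  have hinner : ∀ z : Fin m → ℝ, ∫⁻ w, G (z, w)
      = ENNReal.ofReal (∏ i, σ i) *
        ENNReal.ofReal (p_z (V.mulVec (fun i => σ i * z i) + b)) := by
    intro z
    have hm1 : Measurable (fun w : Fin (n-m) → ℝ =>
        ENNReal.ofReal (p_inv w (fun i => σ i * z i))) := by
      exact ENNReal.measurable_ofReal.comp
        (hpinvmeas.comp (measurable_id.prodMk measurable_const))
    simp only [hGdef]
    simp_rw [mul_assoc]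
    rw [lintegral_mul_const _ hm1]
    rw [lintegral_ofReal_eq_one (fun w => hpinv w _) (hpinvint _), one_mul]
  simp_rw [hinner]
  have hm2 : Measurable (fun z : Fin m → ℝ =>
      ENNReal.ofReal (p_z (V.mulVec (fun i => σ i * z i) + b))) := by
    exact ENNReal.measurable_ofReal.comp
      (hpzmeas.comp (((measurable_mulVec' V).comp
        (measurable_pi_iff.2 fun i => (measurable_pi_apply i).const_mul _)).add_const b))
  rw [lintegral_const_mul _ hm2]
  have hm3 : Measurable (fun z : Fin m → ℝ => ENNReal.ofReal (p_z (V.mulVec z + b))) := by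
    exact ENNReal.measurable_ofReal.comp (hpzmeas.comp ((measurable_mulVec' V).add_const b))
  rw [lintegral_scale σ hσ (fun z => ENNReal.ofReal (p_z (V.mulVec z + b))) hm3]
  rw [← mul_assoc, ENNReal.mul_inv_cancel (by positivity) ENNReal.ofReal_ne_top, one_mul]
  have hm4 : Measurable (fun z : Fin m → ℝ => ENNReal.ofReal (p_z (z + b))) := by
    exact ENNReal.measurable_ofReal.comp (hpzmeas.comp (measurable_add_const b))
  rw [lintegral_mulVec_det_one V hVdet _ hm4]
  rw [lintegral_add_right_eq_self (fun z => ENNReal.ofReal (p_z z)) b]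
  exact lintegral_ofReal_eq_one hpz hpzint
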